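/- Let (Ω, P) be a probability space and let S0, S1, A0, A1 be random variables with S0, S1 ∈ {0,1}, and A0, A1 ∈ {0,1} on the event {S0 = 1} and {S1 = 1}, respectively. Assume monotonicity: P(S1 ≥ S0) = 1 and P(A1 ≥ A0 | S1 = S0 = 1) = 1 (meaning A1 ≥ A0 a.s. on the event {S0 = S1 = 1}). Then P(S0 = S1 = 1, A1 > A0) ≤ P(S1 = 1, A1 = 1) - P(S0 = 1, A0 = 1). -/
import Mathlib


open MeasureTheory

/-- Upper bound on the survivor-complier proportion (Theorem 1, no covariates):
under selection and treatment monotonicity,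
`P(S0 = S1 = 1, A1 > A0) ≤ P(S1 = 1, A1 = 1) - P(S0 = 1, A0 = 1)`. -/
theorem stmt_5 {Ω : Type*} [MeasurableSpace Ω] (μ : Measure Ω) [IsProbabilityMeasure μ]
    (S0 S1 A0 A1 : Ω → ℝ)
    (hS0 : Measurable S0) (hS1 : Measurable S1)
    (hA0 : Measurable A0) (hA1 : Measurable A1)
    (hS0bin : ∀ᵐ ω ∂μ, S0 ω = 0 ∨ S0 ω = 1)
    (hS1bin : ∀ᵐ ω ∂μ, S1 ω = 0 ∨ S1 ω = 1)
    (hA0bin : ∀ᵐ ω ∂μ, S0 ω = 1 → (A0 ω = 0 ∨ A0 ω = 1))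
    (hA1bin : ∀ᵐ ω ∂μ, S1 ω = 1 → (A1 ω = 0 ∨ A1 ω = 1))
    (hmonoS : ∀ᵐ ω ∂μ, S0 ω ≤ S1 ω)
    (hmonoA : ∀ᵐ ω ∂μ, (S0 ω = 1 ∧ S1 ω = 1) → A0 ω ≤ A1 ω) :
    (μ {ω | S0 ω = 1 ∧ S1 ω = 1 ∧ A0 ω < A1 ω}).toReal ≤
      (μ {ω | S1 ω = 1 ∧ A1 ω = 1}).toReal - (μ {ω | S0 ω = 1 ∧ A0 ω = 1}).toReal := by
  set D := {ω | S0 ω = 1 ∧ S1 ω = 1 ∧ A0 ω < A1 ω} with hDdef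
  set B := {ω | S1 ω = 1 ∧ A1 ω = 1} with hBdef
  set C := {ω | S0 ω = 1 ∧ A0 ω = 1} with hCdef
  have hDm : MeasurableSet D :=
    (hS0 (measurableSet_singleton 1)).inter
      ((hS1 (measurableSet_singleton 1)).inter (measurableSet_lt hA0 hA1))
  have hCm : MeasurableSet C :=
    (hS0 (measurableSet_singleton 1)).inter (hA0 (measurableSet_singleton 1))
  -- a.e. on D ∩ C we get a contradiction, so μ (D ∩ C) = 0
  have hdisj : μ (D ∩ C) = 0 := by
    have h : ∀ᵐ ω ∂μ, ω ∉ D ∩ C := by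
      filter_upwards [hA1bin] with ω h1
      rintro ⟨⟨_, hs1, hlt⟩, _, ha0⟩
      rcases h1 hs1 with h | h <;> rw [ha0] at hlt <;> linarith
    exact measure_mono_null (fun ω hω => hω) (by
      have := Filter.eventually_iff.mp h
      simpa [ae_iff] using h)
  -- a.e., D ∪ C ⊆ B
  have hsub : μ ((D ∪ C) \ B) = 0 := by
    have h : ∀ᵐ ω ∂μ, ω ∈ D ∪ C → ω ∈ B := by
      filter_upwards [hS1bin, hA0bin, hA1bin, hmonoS, hmonoA] with ω hs1b ha0b ha1b hms hma hω
      rcases hω with ⟨hs0, hs1, hlt⟩ | ⟨hs0, ha0⟩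
      · refine ⟨hs1, ?_⟩
        rcases ha1b hs1 with h | h
        · rcases ha0b hs0 with h0 | h0 <;> rw [h0, h] at hlt <;> linarith
        · exact h
      · have hs1 : S1 ω = 1 := by
          rcases hs1b with h | h
          · rw [hs0] at hms; rw [h] at hms; linarith
          · exact h
        refine ⟨hs1, ?_⟩
        have := hma ⟨hs0, hs1⟩
        rw [ha0] at this
        rcases ha1b hs1 with h | h
        · linarith [h ▸ this]
        · exact h
    rw [ae_iff] at h
    exact measure_mono_null (fun ω (hω : ω ∈ (D ∪ C) \ B) (himp : ω ∈ D ∪ C → ω ∈ B) => hω.2 (himp hω.1)) h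
  have hunion : μ D + μ C = μ (D ∪ C) :=
    (measure_union₀_aux hDm.nullMeasurableSet hCm.nullMeasurableSet hdisj).symm
  have hle : μ (D ∪ C) ≤ μ B := by
    calc μ (D ∪ C) ≤ μ (B ∪ (D ∪ C) \ B) := measure_mono (by
            intro ω hω
            by_cases hb : ω ∈ B
            · exact Or.inl hb
            · exact Or.inr ⟨hω, hb⟩)
      _ ≤ μ B + μ ((D ∪ C) \ B) := measure_union_le _ _
      _ = μ B := by rw [hsub, add_zero]
  have hsum : μ D + μ C ≤ μ B := hunion ▸ hle
  have hfin : ∀ s : Set Ω, μ s ≠ ⊤ := fun s => (measure_lt_top μ s).ne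
  have := ENNReal.toReal_mono (hfin B) hsum
  rw [ENNReal.toReal_add (hfin D) (hfin C)] at this
  linarith
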